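/- Let P be an arbitrary m×n real matrix of rank r and let P_e be an m×r matrix whose columns are linearly independent and span the same subspace 𝒫 as the columns of P (for example, the nonzero columns of a column echelon form of P). Set W = P_e(P_eᵀP_e)⁻¹P_eᵀ − E_m = [W_k|W'], where W_k is the block of the first k columns of W. Then: (1) if W_k = 0, then for every l ∈ ℒ, d(l,𝒫) = d(ℒ,𝒫) and this distance is attained; (2) if W_k ≠ 0, then for l_pred = (t_pred, l')ᵀ ∈ ℒ there exists p₀ ∈ 𝒫 with d(l_pred, p₀) = d(ℒ,𝒫) if and only if W_k t_pred = −proj_{⟨W_k⟩}(W' l'), where proj_{⟨W_k⟩} is the orthogonal projection onto the column space of W_k. -/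

import Mathlib

open Matrix

/-- Distance between two subsets of a metric space. -/
noncomputable def setDist {X : Type*} [MetricSpace X] (A B : Set X) : ℝ :=
  sInf (Set.image2 dist A B)

/-- The identity map viewing a vector in `Fin m → ℝ` as a point of Euclidean space. -/
def toE {m : ℕ} (x : Fin m → ℝ) : EuclideanSpace ℝ (Fin m) := WithLp.toLp 2 x

lemma inner_toE {m : ℕ} (a b : Fin m → ℝ) :
    (inner ℝ (toE a) (toE b) : ℝ) = dotProduct a b := by
  simp [toE, PiLp.inner_apply, RCLike.inner_apply, dotProduct, mul_comm]

lemma toE_sum_smul {m r : ℕ} (A : Matrix (Fin m) (Fin r) ℝ) (c : Fin r → ℝ) :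
    toE (A.mulVec c) = ∑ j, c j • (WithLp.toLp 2 (Aᵀ j) : EuclideanSpace ℝ (Fin m)) := by
  ext i
  simp [toE, Matrix.mulVec, dotProduct, mul_comm]

lemma toE_add {m : ℕ} (a b : Fin m → ℝ) : toE (a + b) = toE a + toE b := rfl
lemma toE_sub {m : ℕ} (a b : Fin m → ℝ) : toE (a - b) = toE a - toE b := rfl

/-- Proposition 5: `P` is an arbitrary `m × n` matrix of rank `r` and `P_e` is an `m × r`
matrix with linearly independent columns spanning the same subspace `𝒫` as the columns of `P`.
With `W = P_e(P_eᵀP_e)⁻¹P_eᵀ − E_m = [W_k|W']`: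
(1) if `W_k = 0`, then for every `l ∈ ℒ`, `d(l,𝒫) = d(ℒ,𝒫)` and this distance is attained;
(2) if `W_k ≠ 0`, then `l_pred = (t_pred,l')ᵀ ∈ ℒ` attains `d(ℒ,𝒫)` iff
`W_k t_pred = −proj_{⟨W_k⟩}(W'l')`. -/
theorem stmt_10 {k q n rk : ℕ} (hk : 1 ≤ k) (hq : 1 ≤ q)
    (P : Matrix (Fin (k + q)) (Fin n) ℝ) (hrank : P.rank = rk)
    (Pe : Matrix (Fin (k + q)) (Fin rk) ℝ)
    (hPe : LinearIndependent ℝ (fun j : Fin rk => (WithLp.toLp 2 (Peᵀ j) : EuclideanSpace ℝ (Fin (k + q)))))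
    (Psub : Submodule ℝ (EuclideanSpace ℝ (Fin (k + q))))
    (hPsub : Psub = Submodule.span ℝ
      (Set.range fun j : Fin n => (WithLp.toLp 2 (Pᵀ j) : EuclideanSpace ℝ (Fin (k + q)))))
    (hspan : Submodule.span ℝ
        (Set.range fun j : Fin rk => (WithLp.toLp 2 (Peᵀ j) : EuclideanSpace ℝ (Fin (k + q)))) = Psub)
    (W : Matrix (Fin (k + q)) (Fin (k + q)) ℝ)
    (hW : W = Pe * (Peᵀ * Pe)⁻¹ * Peᵀ - 1)
    (Wk : Matrix (Fin (k + q)) (Fin k) ℝ) (hWk : Wk = fun i j => W i (Fin.castAdd q j))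
    (W' : Matrix (Fin (k + q)) (Fin q) ℝ) (hW' : W' = fun i j => W i (Fin.natAdd k j))
    (WkSpan : Submodule ℝ (EuclideanSpace ℝ (Fin (k + q))))
    (hWkSpan : WkSpan = Submodule.span ℝ
      (Set.range fun j : Fin k => (WithLp.toLp 2 (Wkᵀ j) : EuclideanSpace ℝ (Fin (k + q)))))
    (l' : Fin q → ℝ)
    (L : Set (EuclideanSpace ℝ (Fin (k + q))))
    (hL : L = {x : EuclideanSpace ℝ (Fin (k + q)) | ∃ t : Fin k → ℝ, x = Fin.append t l'}) :
    (Wk = 0 → ∀ l ∈ L,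
      Metric.infDist l ↑Psub = setDist L ↑Psub ∧
      ∃ p ∈ Psub, dist l p = setDist L ↑Psub) ∧
    (Wk ≠ 0 → ∀ (tpred : Fin k → ℝ) (lpred : EuclideanSpace ℝ (Fin (k + q))),
      lpred = Fin.append tpred l' →
      ((∃ p₀ ∈ Psub, dist lpred p₀ = setDist L ↑Psub) ↔
        toE (Wk.mulVec tpred) =
          -(Submodule.orthogonalProjectionOnto WkSpan (toE (W'.mulVec l')) :
            EuclideanSpace ℝ (Fin (k + q))))) := by
  clear hPsub hrank hk hq P
  set G := Peᵀ * Pe with hG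
  -- columns of Pe give injective mulVec
  have h0 : ∀ c : Fin rk → ℝ, Pe.mulVec c = 0 → c = 0 := by
    intro c hc
    have hsum : ∑ j, c j • (WithLp.toLp 2 (Peᵀ j) : EuclideanSpace ℝ (Fin (k + q))) = 0 := by
      rw [← toE_sum_smul, hc]; rfl
    exact funext (Fintype.linearIndependent_iff.mp hPe c hsum)
  have hdet : IsUnit G.det := by
    rw [isUnit_iff_ne_zero]
    intro h
    obtain ⟨v, hvne, hv0⟩ := (Matrix.exists_mulVec_eq_zero_iff).mpr h
    refine hvne (h0 v (dotProduct_self_eq_zero.mp ?_))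
    calc dotProduct (Pe.mulVec v) (Pe.mulVec v)
        = dotProduct v (G.mulVec v) := by
          rw [hG, ← Matrix.mulVec_mulVec, Matrix.dotProduct_mulVec v Peᵀ, Matrix.vecMul_transpose]
      _ = 0 := by rw [hv0, dotProduct_zero]
  have hGinv : G * G⁻¹ = 1 := Matrix.mul_nonsing_inv G hdet
  set M := Pe * G⁻¹ * Peᵀ with hM
  -- M maps into Psub
  have hMmem : ∀ x : Fin (k + q) → ℝ, toE (M.mulVec x) ∈ Psub := by
    intro x
    rw [← hspan, hM, Matrix.mul_assoc, ← Matrix.mulVec_mulVec, toE_sum_smul]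
    exact Submodule.sum_mem _ fun j _ =>
      Submodule.smul_mem _ _ (Submodule.subset_span ⟨j, rfl⟩)
  -- W x is orthogonal to Psub
  have hPtW : Peᵀ * W = 0 := by
    rw [hW, Matrix.mul_sub, Matrix.mul_one, show Peᵀ * (Pe * (Peᵀ * Pe)⁻¹ * Peᵀ) = Peᵀ * Pe * (Peᵀ * Pe)⁻¹ * Peᵀ by
      simp only [Matrix.mul_assoc], ← hG, hGinv, Matrix.one_mul, sub_self]
  have horth : ∀ (x : Fin (k + q) → ℝ), ∀ p ∈ Psub,
      (inner ℝ (toE (W.mulVec x)) p : ℝ) = 0 := by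
    intro x p hp
    rw [← hspan] at hp
    induction hp using Submodule.span_induction with
    | mem p hpm =>
        obtain ⟨j, rfl⟩ := hpm
        show (inner ℝ (toE (W.mulVec x)) (toE (Peᵀ j)) : ℝ) = 0
        rw [inner_toE]
        have : Peᵀ.mulVec (W.mulVec x) = 0 := by
          rw [Matrix.mulVec_mulVec, hPtW, Matrix.zero_mulVec]
        calc dotProduct (W.mulVec x) (Peᵀ j)
            = (Peᵀ.mulVec (W.mulVec x)) j := by
              simp [Matrix.mulVec, dotProduct, mul_comm]
          _ = 0 := by rw [this]; rfl
    | zero => exact inner_zero_right _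
    | add u v hu hv ihu ihv => rw [inner_add_right, ihu, ihv, add_zero]
    | smul a u hu ihu => rw [inner_smul_right, ihu, mul_zero]
  -- distance from any point to Psub
  have hdist : ∀ x : Fin (k + q) → ℝ,
      Metric.infDist (toE x) (Psub : Set (EuclideanSpace ℝ (Fin (k + q)))) = ‖toE (W.mulVec x)‖ := by
    intro x
    have hWx : toE (W.mulVec x) = toE (M.mulVec x) - toE x := by
      rw [hW, Matrix.sub_mulVec, Matrix.one_mulVec, toE_sub]
    apply le_antisymm
    · calc Metric.infDist (toE x) (Psub : Set _) ≤ dist (toE x) (toE (M.mulVec x)) :=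
            Metric.infDist_le_dist_of_mem (hMmem x)
        _ = ‖toE (W.mulVec x)‖ := by
            rw [dist_eq_norm, ← norm_neg, neg_sub, hWx]
    · refine le_of_not_gt fun hlt => ?_
      obtain ⟨p, hp, hdp⟩ := (Metric.infDist_lt_iff ⟨0, Psub.zero_mem⟩).mp hlt
      have hsplit : toE x - p = -(toE (W.mulVec x)) + (toE (M.mulVec x) - p) := by
        rw [hWx]; abel
      have hiz : (inner ℝ (-(toE (W.mulVec x))) (toE (M.mulVec x) - p) : ℝ) = 0 := by
        rw [inner_neg_left, horth x _ (Submodule.sub_mem _ (hMmem x) hp), neg_zero]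
      have hpy : ‖toE x - p‖ ^ 2
          = ‖toE (W.mulVec x)‖ ^ 2 + ‖toE (M.mulVec x) - p‖ ^ 2 := by
        rw [hsplit, norm_add_sq_real, hiz, norm_neg]; ring
      have h1 : ‖toE (W.mulVec x)‖ ≤ ‖toE x - p‖ := by
        nlinarith [norm_nonneg (toE x - p), norm_nonneg (toE (W.mulVec x)),
          norm_nonneg (toE (M.mulVec x) - p)]
      rw [dist_eq_norm] at hdp
      linarith
  -- splitting W on appended vectors
  have hsplitW : ∀ t : Fin k → ℝ,
      W.mulVec (Fin.append t l') = Wk.mulVec t + W'.mulVec l' := by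
    intro t
    funext i
    rw [hWk, hW']
    simp [Matrix.mulVec, dotProduct, Fin.sum_univ_add, Fin.append_left,
      Fin.append_right]
  set y : EuclideanSpace ℝ (Fin (k + q)) := toE (W'.mulVec l') with hy
  set prj : EuclideanSpace ℝ (Fin (k + q)) := (Submodule.orthogonalProjectionOnto WkSpan y : EuclideanSpace ℝ (Fin (k + q))) with hprj
  have hFmem : ∀ t : Fin k → ℝ, toE (Wk.mulVec t) ∈ WkSpan := by
    intro t
    rw [hWkSpan, toE_sum_smul]
    exact Submodule.sum_mem _ fun j _ =>
      Submodule.smul_mem _ _ (Submodule.subset_span ⟨j, rfl⟩)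
  have hFsurj : ∀ v ∈ WkSpan, ∃ t : Fin k → ℝ, toE (Wk.mulVec t) = v := by
    intro v hv
    rw [hWkSpan] at hv
    obtain ⟨c, hc⟩ := (Submodule.mem_span_range_iff_exists_fun ℝ).mp hv
    exact ⟨c, by rw [toE_sum_smul, hc]⟩
  have hπmem : prj ∈ WkSpan := SetLike.coe_mem _
  have hyπ : y - prj ∈ WkSpanᗮ := WkSpan.sub_starProjection_mem_orthogonal y
  have hpyth : ∀ v ∈ WkSpan, ‖v + y‖ ^ 2 = ‖v + prj‖ ^ 2 + ‖y - prj‖ ^ 2 := by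
    intro v hv
    have hsp : v + y = (v + prj) + (y - prj) := by abel
    have hiz : (inner ℝ (v + prj) (y - prj) : ℝ) =
        0 := (Submodule.mem_orthogonal _ _).mp hyπ _ (Submodule.add_mem _ hv hπmem)
    rw [hsp, norm_add_sq_real, hiz]; ring
  have hlow : ∀ v ∈ WkSpan, ‖y - prj‖ ≤ ‖v + y‖ := by
    intro v hv
    have := hpyth v hv
    nlinarith [norm_nonneg (v + y), norm_nonneg (v + prj), norm_nonneg (y - prj)]
  obtain ⟨t₀, ht₀⟩ := hFsurj (-prj) (Submodule.neg_mem _ hπmem)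
  -- distance formula on L
  have hinfL : ∀ t : Fin k → ℝ,
      Metric.infDist (toE (Fin.append t l')) (Psub : Set _) = ‖toE (Wk.mulVec t) + y‖ := by
    intro t
    rw [hdist, hsplitW, toE_add]
  have hdistM : ∀ t : Fin k → ℝ,
      dist (toE (Fin.append t l')) (toE (M.mulVec (Fin.append t l'))) = ‖toE (Wk.mulVec t) + y‖ := by
    intro t
    rw [dist_eq_norm, ← norm_neg, neg_sub, show toE (M.mulVec (Fin.append t l')) - toE (Fin.append t l') = toE (W.mulVec (Fin.append t l')) by
      rw [hW, Matrix.sub_mulVec, Matrix.one_mulVec, toE_sub], hsplitW, toE_add]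
  have hLmem : ∀ t : Fin k → ℝ, toE (Fin.append t l') ∈ L := by
    intro t; rw [hL]; exact ⟨t, rfl⟩
  -- the set distance
  have hlb : ∀ d ∈ Set.image2 dist L (Psub : Set (EuclideanSpace ℝ (Fin (k + q)))), ‖y - prj‖ ≤ d := by
    rintro d ⟨l, hl, p, hp, rfl⟩
    rw [hL] at hl
    obtain ⟨t, ht⟩ := hl
    obtain rfl : l = toE (Fin.append t l') := by rw [← ht]; rfl
    calc ‖y - prj‖ ≤ ‖toE (Wk.mulVec t) + y‖ := hlow _ (hFmem t)
      _ = Metric.infDist (toE (Fin.append t l')) (Psub : Set _) := (hinfL t).symm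
      _ ≤ dist (toE (Fin.append t l')) p := Metric.infDist_le_dist_of_mem hp
  have hd0 : dist (toE (Fin.append t₀ l')) (toE (M.mulVec (Fin.append t₀ l'))) = ‖y - prj‖ := by
    rw [hdistM, ht₀, neg_add_eq_sub]
  have hmem0 : ‖y - prj‖ ∈ Set.image2 dist L (Psub : Set (EuclideanSpace ℝ (Fin (k + q)))) :=
    ⟨toE (Fin.append t₀ l'), hLmem t₀, toE (M.mulVec (Fin.append t₀ l')), hMmem _, hd0⟩
  have hset : setDist L (Psub : Set (EuclideanSpace ℝ (Fin (k + q)))) = ‖y - prj‖ := by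
    unfold setDist
    exact le_antisymm (csInf_le ⟨‖y - prj‖, hlb⟩ hmem0) (le_csInf ⟨_, hmem0⟩ hlb)
  constructor
  · -- part 1
    intro hWk0 l hl
    rw [hL] at hl
    obtain ⟨t, ht⟩ := hl
    obtain rfl : l = toE (Fin.append t l') := by rw [← ht]; rfl
    have hF0 : ∀ s : Fin k → ℝ, toE (Wk.mulVec s) = 0 := by
      intro s; rw [hWk0, Matrix.zero_mulVec]; rfl
    have hπ0 : prj = 0 := by
      have hbot : WkSpan = ⊥ := by
        rw [hWkSpan, hWk0]
        have : (Set.range fun j : Fin k => (WithLp.toLp 2 ((0 : Matrix (Fin (k+q)) (Fin k) ℝ)ᵀ j) : EuclideanSpace ℝ (Fin (k + q)))) ⊆ {0} := by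
          rintro _ ⟨j, rfl⟩
          simp [Matrix.transpose_zero]
          rfl
        refine le_antisymm ?_ bot_le
        calc Submodule.span ℝ _ ≤ Submodule.span ℝ {0} := Submodule.span_mono this
          _ = ⊥ := Submodule.span_zero_singleton ℝ
      have := hπmem
      rw [hbot, Submodule.mem_bot] at this
      exact this
    constructor
    · show Metric.infDist (toE (Fin.append t l')) (Psub : Set _) = setDist L (Psub : Set _)
      rw [hinfL, hset, hF0, zero_add, hπ0, sub_zero]
    · refine ⟨toE (M.mulVec (Fin.append t l')), hMmem _, ?_⟩
      show dist (toE (Fin.append t l')) (toE (M.mulVec (Fin.append t l'))) = setDist L (Psub : Set _)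
      rw [hdistM, hset, hF0, zero_add, hπ0, sub_zero]
  · -- part 2
    intro _ tpred lpred hlp
    obtain rfl : lpred = toE (Fin.append tpred l') := by rw [← hlp]; rfl
    constructor
    · rintro ⟨p₀, hp₀, hd⟩
      have h2 : ‖toE (Wk.mulVec tpred) + y‖ ≤ ‖y - prj‖ := by
        calc ‖toE (Wk.mulVec tpred) + y‖
            = Metric.infDist (toE (Fin.append tpred l')) (Psub : Set _) := (hinfL tpred).symm
          _ ≤ dist (toE (Fin.append tpred l')) p₀ := Metric.infDist_le_dist_of_mem hp₀
          _ = ‖y - prj‖ := hd.trans hset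
      have h1 : ‖y - prj‖ ≤ ‖toE (Wk.mulVec tpred) + y‖ := hlow _ (hFmem tpred)
      have heq : ‖toE (Wk.mulVec tpred) + y‖ = ‖y - prj‖ := le_antisymm h2 h1
      have hp := hpyth (toE (Wk.mulVec tpred)) (hFmem tpred)
      have hz : ‖toE (Wk.mulVec tpred) + prj‖ = 0 := by
        have : ‖toE (Wk.mulVec tpred) + prj‖ ^ 2 = 0 := by
          rw [heq] at hp; linarith
        exact pow_eq_zero_iff (by norm_num) |>.mp this
      have hzz : toE (Wk.mulVec tpred) + prj = 0 := norm_eq_zero.mp hz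
      exact eq_neg_of_add_eq_zero_left hzz
    · intro h
      refine ⟨toE (M.mulVec (Fin.append tpred l')), hMmem _, ?_⟩
      show dist (toE (Fin.append tpred l')) (toE (M.mulVec (Fin.append tpred l'))) = setDist L (Psub : Set _)
      rw [hdistM, hset]
      rw [show toE (Wk.mulVec tpred) = -prj from h, neg_add_eq_sub]
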